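/- (Hybrid large sieve.) There is an absolute constant C such that for every positive integer q, every real U ≥ 1, every positive integer N, and every sequence of complex numbers (a_n)_{1≤n≤N}, one has ∫_{−U}^{U} ∑_{ψ mod q} |∑_{n=1}^{N} a_n ψ(n) n^{iu}|² du ≤ C (qU + N) ∑_{n=1}^{N} |a_n|², where the sum over ψ runs over all Dirichlet characters modulo q. -/

import Mathlib

open MeasureTheory Complex Finset

noncomputable def Eint (ξ a b : ℝ) : ℂ := ∫ u in a..b, Complex.exp (Complex.I * ξ * u)

lemma contE (ξ : ℝ) : Continuous fun u : ℝ => Complex.exp (Complex.I * ξ * u) := by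
  fun_prop

lemma norm_exp_I_mul (ξ u : ℝ) : ‖Complex.exp (Complex.I * ξ * u)‖ = 1 := by
  rw [Complex.norm_exp]
  simp [mul_comm, mul_assoc]

lemma norm_Eint_le (ξ a b : ℝ) : ‖Eint ξ a b‖ ≤ |b - a| := by
  have := intervalIntegral.norm_integral_le_of_norm_le_const
    (C := 1) (f := fun u : ℝ => Complex.exp (Complex.I * ξ * u)) (a := a) (b := b)
    (fun x _ => le_of_eq (norm_exp_I_mul ξ x))
  simpa [Eint] using this

lemma norm_Eint_le' {ξ : ℝ} (hξ : ξ ≠ 0) (a b : ℝ) : ‖Eint ξ a b‖ ≤ 2 / |ξ| := by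
  have hc : (Complex.I * ξ) ≠ 0 := by
    simp [Complex.ext_iff, hξ]
  have : Eint ξ a b = (Complex.exp (Complex.I * ξ * b) - Complex.exp (Complex.I * ξ * a)) / (Complex.I * ξ) := by
    simpa [Eint, mul_comm] using integral_exp_mul_complex hc (a := a) (b := b)
  rw [this, norm_div]
  have h1 : ‖Complex.exp (Complex.I * ξ * b) - Complex.exp (Complex.I * ξ * a)‖ ≤ 2 := by
    refine (norm_sub_le _ _).trans ?_
    rw [norm_exp_I_mul, norm_exp_I_mul]; norm_num
  have h2 : ‖Complex.I * (ξ:ℂ)‖ = |ξ| := by simp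
  rw [h2]
  gcongr

lemma basel_aux : ∀ K : ℕ, ∑ k ∈ Icc 1 (K+1), (1:ℝ)/(k:ℝ)^2 ≤ 2 - 1/(K+1) := by
  intro K
  induction K with
  | zero => norm_num
  | succ K ih =>
    rw [show K + 1 + 1 = (K+1) + 1 from rfl, Finset.sum_Icc_succ_top (by norm_num)]
    have hK : (0:ℝ) < (K:ℝ) + 1 := by positivity
    have hK2 : (0:ℝ) < (K:ℝ) + 2 := by positivity
    have key : (1:ℝ)/(((K+1+1:ℕ)):ℝ)^2 ≤ 1/((K:ℝ)+1) - 1/((K:ℝ)+2) := by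
      push_cast
      rw [div_sub_div _ _ (ne_of_gt hK) (ne_of_gt hK2), div_le_div_iff₀ (by positivity) (by positivity)]
      nlinarith
    push_cast at key ih ⊢
    rw [show (K:ℝ)+1+1 = (K:ℝ)+2 by ring] at key ⊢
    linarith

lemma basel (K : ℕ) : ∑ k ∈ Icc 1 K, (1:ℝ)/(k:ℝ)^2 ≤ 2 := by
  cases K with
  | zero => simp
  | succ K =>
    have := basel_aux K
    have h : (0:ℝ) < 1/((K:ℝ)+1) := by positivity
    push_cast at this ⊢
    linarith

lemma sum_le_two_div_sq (q N : ℕ) (hq : 0 < q) (s : Finset ℕ) (e : ℕ → ℕ) (f : ℕ → ℝ)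
    (he : ∀ n ∈ s, e n ∈ Icc 1 N) (hinj : ∀ n₁ ∈ s, ∀ n₂ ∈ s, e n₁ = e n₂ → n₁ = n₂)
    (hf : ∀ n ∈ s, f n ≤ 1/((q:ℝ)^2 * (e n:ℝ)^2)) :
    ∑ n ∈ s, f n ≤ 2/(q:ℝ)^2 := by
  have hq' : (0:ℝ) < (q:ℝ)^2 := by positivity
  calc ∑ n ∈ s, f n ≤ ∑ n ∈ s, (1/(q:ℝ)^2) * (1/((e n:ℝ))^2) := by
        refine Finset.sum_le_sum fun n hn => ?_
        exact (hf n hn).trans_eq (by ring)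
      _ = ∑ k ∈ s.image e, (1/(q:ℝ)^2) * (1/((k:ℝ))^2) := by
        rw [Finset.sum_image hinj]
      _ ≤ ∑ k ∈ Icc 1 N, (1/(q:ℝ)^2) * (1/((k:ℝ))^2) := by
        refine Finset.sum_le_sum_of_subset_of_nonneg ?_ (fun k _ _ => by positivity)
        intro k hk
        obtain ⟨n, hn, rfl⟩ := Finset.mem_image.mp hk
        exact he n hn
      _ = (1/(q:ℝ)^2) * ∑ k ∈ Icc 1 N, (1/((k:ℝ))^2) := by rw [Finset.mul_sum]
      _ ≤ (1/(q:ℝ)^2) * 2 := by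
        refine mul_le_mul_of_nonneg_left (basel N) (by positivity)
      _ = 2/(q:ℝ)^2 := by ring

lemma count_lemma (q N m : ℕ) (hq : 0 < q) (hm : m ≤ N) :
    ∑ n ∈ (Icc 1 N).filter (fun n : ℕ => (n:ZMod q) = (m:ZMod q) ∧ n ≠ m),
      (1:ℝ)/((m:ℝ)-(n:ℝ))^2 ≤ 4/(q:ℝ)^2 := by
  set s := (Icc 1 N).filter (fun n : ℕ => (n:ZMod q) = (m:ZMod q) ∧ n ≠ m) with hs
  have hmem : ∀ n ∈ s, n ∈ Icc 1 N ∧ n ≡ m [MOD q] ∧ n ≠ m := by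
    intro n hn
    rw [hs, Finset.mem_filter] at hn
    exact ⟨hn.1, (ZMod.natCast_eq_natCast_iff n m q).mp hn.2.1, hn.2.2⟩
  have key := Finset.sum_filter_add_sum_filter_not s (fun n => n < m)
    (fun n => (1:ℝ)/((m:ℝ)-(n:ℝ))^2)
  have h1 : ∑ n ∈ s.filter (fun n => n < m), (1:ℝ)/((m:ℝ)-(n:ℝ))^2 ≤ 2/(q:ℝ)^2 := by
    apply sum_le_two_div_sq q N hq _ (fun n => (m-n)/q)
    · intro n hn
      rw [Finset.mem_filter] at hn
      obtain ⟨_, hc, _⟩ := hmem n hn.1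
      have hlt := hn.2
      have hd : q ∣ m - n := (Nat.modEq_iff_dvd' hlt.le).mp hc
      have hpos : 0 < m - n := by omega
      have hle : q ≤ m - n := Nat.le_of_dvd hpos hd
      simp only [Finset.mem_Icc]
      constructor
      · exact (Nat.one_le_div_iff hq).mpr hle
      · exact le_trans (Nat.div_le_self _ _) (by omega)
    · intro n₁ hn₁ n₂ hn₂ he
      rw [Finset.mem_filter] at hn₁ hn₂
      obtain ⟨_, hc₁, _⟩ := hmem n₁ hn₁.1
      obtain ⟨_, hc₂, _⟩ := hmem n₂ hn₂.1
      have hd₁ : q ∣ m - n₁ := (Nat.modEq_iff_dvd' hn₁.2.le).mp hc₁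
      have hd₂ : q ∣ m - n₂ := (Nat.modEq_iff_dvd' hn₂.2.le).mp hc₂
      have e₁ := Nat.div_mul_cancel hd₁
      have e₂ := Nat.div_mul_cancel hd₂
      have h1 := hn₁.2; have h2 := hn₂.2
      rw [he] at e₁
      omega
    · intro n hn
      rw [Finset.mem_filter] at hn
      obtain ⟨_, hc, _⟩ := hmem n hn.1
      have hd : q ∣ m - n := (Nat.modEq_iff_dvd' hn.2.le).mp hc
      have e₁ := Nat.div_mul_cancel hd
      have hmul : (m - n : ℕ) = q * ((m-n)/q) := (Nat.mul_div_cancel' hd).symm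
      have hcast : (m:ℝ) - (n:ℝ) = (q:ℝ) * (((m-n)/q : ℕ):ℝ) := by
        calc (m:ℝ) - (n:ℝ) = ((m - n:ℕ):ℝ) := by rw [Nat.cast_sub hn.2.le]
          _ = ((q * ((m-n)/q) : ℕ) : ℝ) := by rw [← hmul]
          _ = (q:ℝ) * (((m-n)/q : ℕ):ℝ) := by push_cast; ring
      rw [hcast]
      apply le_of_eq
      congr 1
      ring
  have h2 : ∑ n ∈ s.filter (fun n => ¬ n < m), (1:ℝ)/((m:ℝ)-(n:ℝ))^2 ≤ 2/(q:ℝ)^2 := by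
    apply sum_le_two_div_sq q N hq _ (fun n => (n-m)/q)
    · intro n hn
      rw [Finset.mem_filter] at hn
      obtain ⟨hIcc, hc, hne⟩ := hmem n hn.1
      have hlt : m < n := by omega
      have hd : q ∣ n - m := (Nat.modEq_iff_dvd' hlt.le).mp hc.symm
      have hpos : 0 < n - m := by omega
      have hle : q ≤ n - m := Nat.le_of_dvd hpos hd
      rw [Finset.mem_Icc] at hIcc ⊢
      constructor
      · exact (Nat.one_le_div_iff hq).mpr hle
      · exact le_trans (Nat.div_le_self _ _) (by omega)
    · intro n₁ hn₁ n₂ hn₂ he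
      rw [Finset.mem_filter] at hn₁ hn₂
      obtain ⟨_, hc₁, hne₁⟩ := hmem n₁ hn₁.1
      obtain ⟨_, hc₂, hne₂⟩ := hmem n₂ hn₂.1
      have hl₁ : m < n₁ := by omega
      have hl₂ : m < n₂ := by omega
      have hd₁ : q ∣ n₁ - m := (Nat.modEq_iff_dvd' hl₁.le).mp hc₁.symm
      have hd₂ : q ∣ n₂ - m := (Nat.modEq_iff_dvd' hl₂.le).mp hc₂.symm
      have e₁ := Nat.div_mul_cancel hd₁
      have e₂ := Nat.div_mul_cancel hd₂
      rw [he] at e₁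
      omega
    · intro n hn
      rw [Finset.mem_filter] at hn
      obtain ⟨_, hc, hne⟩ := hmem n hn.1
      have hlt : m < n := by omega
      have hd : q ∣ n - m := (Nat.modEq_iff_dvd' hlt.le).mp hc.symm
      have e₁ := Nat.div_mul_cancel hd
      have hmul : (n - m : ℕ) = q * ((n-m)/q) := (Nat.mul_div_cancel' hd).symm
      have hcast : (n:ℝ) - (m:ℝ) = (q:ℝ) * (((n-m)/q : ℕ):ℝ) := by
        calc (n:ℝ) - (m:ℝ) = ((n - m:ℕ):ℝ) := by rw [Nat.cast_sub hlt.le]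
          _ = ((q * ((n-m)/q) : ℕ) : ℝ) := by rw [← hmul]
          _ = (q:ℝ) * (((n-m)/q : ℕ):ℝ) := by push_cast; ring
      have : ((m:ℝ) - (n:ℝ))^2 = ((q:ℝ) * (((n-m)/q : ℕ):ℝ))^2 := by
        rw [← hcast]; ring
      rw [this]
      apply le_of_eq
      congr 1
      ring
  have : 2/(q:ℝ)^2 + 2/(q:ℝ)^2 = 4/(q:ℝ)^2 := by ring
  linarith


lemma Kchar (q : ℕ) [NeZero q] (x y : ZMod q) :
    (∑ ψ : DirichletCharacter ℂ q, ψ x * (starRingEnd ℂ) (ψ y)) =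
      if y = x ∧ IsUnit y then (q.totient : ℂ) else 0 := by
  by_cases hy : IsUnit y
  · have hconj : ∀ ψ : DirichletCharacter ℂ q, (starRingEnd ℂ) (ψ y) = ψ y⁻¹ := by
      intro ψ
      have hn : ‖ψ y‖ = 1 := by
        obtain ⟨u, rfl⟩ := hy
        have h := ψ.unit_norm_eq_one u
        exact h
      have h1 : ψ y⁻¹ * ψ y = 1 := by
        rw [← map_mul, ZMod.inv_mul_of_unit y hy, map_one]
      have h2 : ψ y⁻¹ = (ψ y)⁻¹ := eq_inv_of_mul_eq_one_left h1
      rw [h2]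
      exact (Complex.inv_eq_conj hn).symm
    have e1 : (∑ ψ : DirichletCharacter ℂ q, ψ x * (starRingEnd ℂ) (ψ y))
        = ∑ ψ : DirichletCharacter ℂ q, ψ y⁻¹ * ψ x :=
      Finset.sum_congr rfl (fun ψ _ => by rw [hconj, mul_comm])
    rw [e1, DirichletCharacter.sum_char_inv_mul_char_eq ℂ hy x]
    simp [hy]
  · have : ∀ ψ : DirichletCharacter ℂ q, ψ x * (starRingEnd ℂ) (ψ y) = 0 := by
      intro ψ
      rw [ψ.map_nonunit hy]
      simp
    rw [Finset.sum_congr rfl (fun ψ _ => this ψ)]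
    simp [hy]


lemma Fprod (s : Finset ℕ) (c : ℕ → ℂ) (lam : ℕ → ℝ) (u : ℝ) :
    (∑ n ∈ s, c n * Complex.exp (Complex.I * lam n * u)) *
      (starRingEnd ℂ) (∑ n ∈ s, c n * Complex.exp (Complex.I * lam n * u)) =
    ∑ m ∈ s, ∑ n ∈ s, (c m * (starRingEnd ℂ) (c n)) *
      Complex.exp (Complex.I * ((lam m - lam n : ℝ) : ℂ) * u) := by
  rw [map_sum, Finset.sum_mul_sum]
  refine Finset.sum_congr rfl fun m _ => Finset.sum_congr rfl fun n _ => ?_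
  rw [map_mul]
  have hconj : (starRingEnd ℂ) (Complex.exp (Complex.I * lam n * u))
      = Complex.exp (-(Complex.I * lam n * u)) := by
    rw [← Complex.exp_conj]; congr 1; simp
  rw [hconj]
  have : Complex.exp (Complex.I * lam m * u) * Complex.exp (-(Complex.I * lam n * u))
      = Complex.exp (Complex.I * ((lam m - lam n : ℝ) : ℂ) * u) := by
    rw [← Complex.exp_add]; congr 1; push_cast; ring
  calc c m * Complex.exp (Complex.I * lam m * u) *
        ((starRingEnd ℂ) (c n) * Complex.exp (-(Complex.I * lam n * u)))
      = (c m * (starRingEnd ℂ) (c n)) *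
        (Complex.exp (Complex.I * lam m * u) * Complex.exp (-(Complex.I * lam n * u))) := by ring
    _ = _ := by rw [this]

lemma int_exp_shift (ξ Lv t : ℝ) :
    (∫ u in (t-Lv)..(t+Lv), Complex.exp (Complex.I * ξ * u))
      = Complex.exp (Complex.I * ξ * t) * Eint ξ (-Lv) Lv := by
  have h := intervalIntegral.integral_comp_add_right
    (a := -Lv) (b := Lv) (f := fun u : ℝ => Complex.exp (Complex.I*ξ*u)) t
  rw [show t - Lv = -Lv + t by ring, show t + Lv = Lv + t by ring, ← h, Eint,
    ← intervalIntegral.integral_const_mul]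
  refine intervalIntegral.integral_congr fun u _ => ?_
  rw [← Complex.exp_add]
  congr 1
  push_cast
  ring

lemma log_gap {n m N : ℕ} (h1 : 1 ≤ n) (hnm : n < m) (hmN : m ≤ N) :
    ((m:ℝ) - n)/N ≤ Real.log m - Real.log n := by
  have hn : (0:ℝ) < n := by exact_mod_cast h1
  have hm : (0:ℝ) < m := lt_trans hn (by exact_mod_cast hnm)
  have hN : (0:ℝ) < N := lt_of_lt_of_le hm (by exact_mod_cast hmN)
  have hlog := Real.log_le_sub_one_of_pos (x := (n:ℝ)/m) (by positivity)
  rw [Real.log_div (ne_of_gt hn) (ne_of_gt hm)] at hlog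
  have h2 : ((m:ℝ) - n)/N ≤ ((m:ℝ) - n)/m := by
    apply div_le_div_of_nonneg_left ?_ hm ?_
    · have : (n:ℝ) ≤ m := le_of_lt (by exact_mod_cast hnm)
      linarith
    · exact_mod_cast hmN
  have h3 : (n:ℝ)/m - 1 = -(((m:ℝ) - n)/m) := by field_simp; ring
  linarith

set_option maxHeartbeats 1000000 in
/-- **Hybrid large sieve (Gallagher; Lemma 8.1)**: there is an absolute constant `C` such
that for every positive modulus `q`, every `U ≥ 1`, every `N`, and all complex `(a_n)`,
`∫_{-U}^{U} ∑_{ψ mod q} |∑_{n ≤ N} a_n ψ(n) n^{iu}|² du ≤ C (qU + N) ∑_{n ≤ N} |a_n|²`. -/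
theorem hybrid_large_sieve :
    ∃ C : ℝ, 0 < C ∧
      ∀ (q : ℕ) [NeZero q], ∀ U : ℝ, 1 ≤ U → ∀ (N : ℕ) (a : ℕ → ℂ),
        (∫ u in (-U)..U, ∑ ψ : DirichletCharacter ℂ q,
            ‖∑ n ∈ Finset.Icc 1 N, a n * ψ (n : ZMod q) *
              (n : ℂ) ^ (Complex.I * u)‖ ^ 2)
          ≤ C * ((q : ℝ) * U + N) * ∑ n ∈ Finset.Icc 1 N, ‖a n‖ ^ 2 := by
  refine ⟨100, by norm_num, ?_⟩
  intro q _ U hU N a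
  have hq : 0 < q := Nat.pos_of_ne_zero (NeZero.ne q)
  have hq' : (0:ℝ) < q := by exact_mod_cast hq
  have hq1 : (1:ℝ) ≤ q := by exact_mod_cast hq
  have hU0 : (0:ℝ) < U := lt_of_lt_of_le one_pos hU
  have hR0 : 0 ≤ ∑ n ∈ Icc 1 N, ‖a n‖ ^ 2 :=
    Finset.sum_nonneg fun n _ => by positivity
  by_cases hN0 : N = 0
  · subst hN0
    have : Icc 1 0 = (∅ : Finset ℕ) := rfl
    rw [this]
    simp only [Finset.sum_empty]
    have : (∫ u in (-U)..U, ∑ ψ : DirichletCharacter ℂ q, ‖(0:ℂ)‖ ^ 2) = 0 := by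
      simp
    rw [this]
    simp
  have hN1 : 1 ≤ N := Nat.one_le_iff_ne_zero.mpr hN0
  have hNr : (1:ℝ) ≤ N := by exact_mod_cast hN1
  set R := ∑ n ∈ Icc 1 N, ‖a n‖ ^ 2 with hRdef
  set δ : ℝ := ((N:ℝ)+1)/q with hδdef
  have hδ : 0 < δ := by positivity
  set L : ℝ := U + δ with hLdef
  have hL : 0 < L := by positivity
  set lam : ℕ → ℝ := fun n => Real.log n with hlam
  set c : DirichletCharacter ℂ q → ℕ → ℂ := fun ψ n => a n * ψ (n : ZMod q) with hcdef
  set F : DirichletCharacter ℂ q → ℝ → ℂ :=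
    fun ψ u => ∑ n ∈ Icc 1 N, c ψ n * Complex.exp (Complex.I * lam n * u) with hFdef
  set S : ℝ → ℝ := fun u => ∑ ψ : DirichletCharacter ℂ q, ‖F ψ u‖ ^ 2 with hSdef
  -- Step A : the integrand equals S
  have hA : ∀ u : ℝ, (∑ ψ : DirichletCharacter ℂ q,
      ‖∑ n ∈ Icc 1 N, a n * ψ (n:ZMod q) * (n:ℂ)^(Complex.I * (u:ℂ))‖ ^ 2) = S u := by
    intro u
    refine Finset.sum_congr rfl fun ψ _ => ?_
    have : (∑ n ∈ Icc 1 N, a n * ψ (n:ZMod q) * (n:ℂ)^(Complex.I * (u:ℂ))) = F ψ u := by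
      refine Finset.sum_congr rfl fun n hn => ?_
      have h1 : 1 ≤ n := (Finset.mem_Icc.mp hn).1
      have hn0 : (n:ℂ) ≠ 0 := by
        simpa using Nat.one_le_iff_ne_zero.mp h1
      have hexp : Complex.log (n:ℂ) * (Complex.I*(u:ℂ)) = Complex.I * ((lam n : ℝ):ℂ) * (u:ℂ) := by
        rw [← Complex.natCast_log]; push_cast [hlam]; ring
      rw [Complex.cpow_def_of_ne_zero hn0, hexp]
    rw [this]
  -- Step B : continuity and integrability
  have hFc : ∀ ψ, Continuous (F ψ) := fun ψ =>
    continuous_finset_sum _ (fun n _ => continuous_const.mul (contE (lam n)))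
  have hSc : Continuous S :=
    continuous_finset_sum _ (fun ψ _ => (continuous_norm.comp (hFc ψ)).pow 2)
  have hS0 : ∀ u, 0 ≤ S u := fun u => Finset.sum_nonneg fun ψ _ => by positivity
  have hSi : ∀ x y : ℝ, IntervalIntegrable S volume x y := fun x y =>
    hSc.intervalIntegrable x y
  -- Step C : kernel extension
  have hg_cont : Continuous (fun t : ℝ => ∫ u in (t-L)..(t+L), S u) := by
    have hp : Continuous (fun x : ℝ => ∫ u in (0:ℝ)..x, S u) :=
      intervalIntegral.continuous_primitive (fun x y => hSi x y) 0
    have heq : (fun t : ℝ => ∫ u in (t-L)..(t+L), S u)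
        = fun t : ℝ => (∫ u in (0:ℝ)..(t+L), S u) - ∫ u in (0:ℝ)..(t-L), S u := by
      funext t
      rw [intervalIntegral.integral_interval_sub_left (hSi 0 (t+L)) (hSi 0 (t-L))]
    rw [heq]
    exact (hp.comp (continuous_id.add continuous_const)).sub
      (hp.comp (continuous_id.sub continuous_const))
  have hmono : ∀ t ∈ Set.Icc (-δ) δ, (∫ u in (-U)..U, S u) ≤ ∫ u in (t-L)..(t+L), S u := by
    intro t ht
    refine intervalIntegral.integral_mono_interval (by simp only [hLdef]; linarith [ht.1, ht.2])
      (by linarith) (by simp only [hLdef]; linarith [ht.1, ht.2])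
      (Filter.Eventually.of_forall (fun x => hS0 x)) (hSi _ _)
  have hkey : 2*δ*(∫ u in (-U)..U, S u) ≤ ∫ t in (-δ)..δ, (∫ u in (t-L)..(t+L), S u) := by
    have h := intervalIntegral.integral_mono_on (μ := volume) (a := -δ) (b := δ)
      (f := fun _ : ℝ => ∫ u in (-U)..U, S u) (g := fun t => ∫ u in (t-L)..(t+L), S u)
      (by linarith) (intervalIntegrable_const) (hg_cont.intervalIntegrable _ _) hmono
    rw [intervalIntegral.integral_const, smul_eq_mul] at h
    calc 2*δ*(∫ u in (-U)..U, S u) = (δ - -δ) * (∫ u in (-U)..U, S u) := by ring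
      _ ≤ _ := h
  -- Step D : expansion of the double integral
  set ξ : ℕ → ℕ → ℝ := fun m n => lam m - lam n with hξdef
  set G : ℕ → ℕ → ℂ := fun m n => Eint (ξ m n) (-δ) δ * Eint (ξ m n) (-L) L with hGdef
  have hW : ∀ t : ℝ, (∫ u in (t-L)..(t+L), S u)
      = (∑ ψ : DirichletCharacter ℂ q, ∑ m ∈ Icc 1 N, ∑ n ∈ Icc 1 N,
          (c ψ m * (starRingEnd ℂ) (c ψ n)) *
            (Complex.exp (Complex.I * (ξ m n) * t) * Eint (ξ m n) (-L) L)).re := by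
    intro t
    have hSu : ∀ u : ℝ, S u = (∑ ψ : DirichletCharacter ℂ q, ∑ m ∈ Icc 1 N, ∑ n ∈ Icc 1 N,
        (c ψ m * (starRingEnd ℂ) (c ψ n)) * Complex.exp (Complex.I * (ξ m n) * u)).re := by
      intro u
      rw [Complex.re_sum]
      refine Finset.sum_congr rfl fun ψ _ => ?_
      have habs : ‖F ψ u‖ ^ 2 = ((F ψ u) * (starRingEnd ℂ) (F ψ u)).re := by
        rw [Complex.mul_conj, Complex.sq_norm]
        simp
      rw [habs]
      congr 1
      exact Fprod (Icc 1 N) (c ψ) lam u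
    have hWcont : Continuous (fun u : ℝ => ∑ ψ : DirichletCharacter ℂ q, ∑ m ∈ Icc 1 N,
        ∑ n ∈ Icc 1 N, (c ψ m * (starRingEnd ℂ) (c ψ n)) *
          Complex.exp (Complex.I * (ξ m n) * u)) :=
      continuous_finset_sum _ fun ψ _ => continuous_finset_sum _ fun m _ =>
        continuous_finset_sum _ fun n _ => continuous_const.mul (contE _)
    calc (∫ u in (t-L)..(t+L), S u)
        = ∫ u in (t-L)..(t+L), (∑ ψ : DirichletCharacter ℂ q, ∑ m ∈ Icc 1 N, ∑ n ∈ Icc 1 N,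
            (c ψ m * (starRingEnd ℂ) (c ψ n)) * Complex.exp (Complex.I * (ξ m n) * u)).re :=
          intervalIntegral.integral_congr (fun u _ => hSu u)
      _ = (∫ u in (t-L)..(t+L), ∑ ψ : DirichletCharacter ℂ q, ∑ m ∈ Icc 1 N, ∑ n ∈ Icc 1 N,
            (c ψ m * (starRingEnd ℂ) (c ψ n)) * Complex.exp (Complex.I * (ξ m n) * u)).re :=
          ContinuousLinearMap.intervalIntegral_comp_comm Complex.reCLM
            (hWcont.intervalIntegrable _ _)
      _ = (∑ ψ : DirichletCharacter ℂ q, ∑ m ∈ Icc 1 N, ∑ n ∈ Icc 1 N,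
          (c ψ m * (starRingEnd ℂ) (c ψ n)) *
            (Complex.exp (Complex.I * (ξ m n) * t) * Eint (ξ m n) (-L) L)).re := by
          congr 1
          rw [intervalIntegral.integral_finset_sum (fun ψ _ =>
            ((continuous_finset_sum _ fun m _ => continuous_finset_sum _ fun n _ =>
              continuous_const.fun_mul (contE _)).intervalIntegrable _ _))]
          refine Finset.sum_congr rfl fun ψ _ => ?_
          rw [intervalIntegral.integral_finset_sum (fun m _ =>
            ((continuous_finset_sum _ fun n _ =>
              continuous_const.fun_mul (contE _)).intervalIntegrable _ _))]
          refine Finset.sum_congr rfl fun m _ => ?_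
          rw [intervalIntegral.integral_finset_sum (fun n _ =>
            ((continuous_const.fun_mul (contE _)).intervalIntegrable _ _))]
          refine Finset.sum_congr rfl fun n _ => ?_
          rw [intervalIntegral.integral_const_mul, int_exp_shift (ξ m n) L t]
  have hD2 : (∫ t in (-δ)..δ, ∫ u in (t-L)..(t+L), S u)
      = (∑ m ∈ Icc 1 N, ∑ n ∈ Icc 1 N,
          ((a m * (starRingEnd ℂ) (a n)) * (∑ ψ : DirichletCharacter ℂ q,
            ψ (m:ZMod q) * (starRingEnd ℂ) (ψ (n:ZMod q)))) * G m n).re := by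
    have hW1cont : Continuous (fun t : ℝ => ∑ ψ : DirichletCharacter ℂ q, ∑ m ∈ Icc 1 N,
        ∑ n ∈ Icc 1 N, (c ψ m * (starRingEnd ℂ) (c ψ n)) *
          (Complex.exp (Complex.I * (ξ m n) * t) * Eint (ξ m n) (-L) L)) :=
      continuous_finset_sum _ fun ψ _ => continuous_finset_sum _ fun m _ =>
        continuous_finset_sum _ fun n _ =>
          (continuous_const.mul ((contE _).fun_mul continuous_const))
    calc (∫ t in (-δ)..δ, ∫ u in (t-L)..(t+L), S u)
        = ∫ t in (-δ)..δ, (∑ ψ : DirichletCharacter ℂ q, ∑ m ∈ Icc 1 N, ∑ n ∈ Icc 1 N,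
            (c ψ m * (starRingEnd ℂ) (c ψ n)) *
              (Complex.exp (Complex.I * (ξ m n) * t) * Eint (ξ m n) (-L) L)).re :=
          intervalIntegral.integral_congr (fun t _ => hW t)
      _ = (∫ t in (-δ)..δ, ∑ ψ : DirichletCharacter ℂ q, ∑ m ∈ Icc 1 N, ∑ n ∈ Icc 1 N,
            (c ψ m * (starRingEnd ℂ) (c ψ n)) *
              (Complex.exp (Complex.I * (ξ m n) * t) * Eint (ξ m n) (-L) L)).re :=
          ContinuousLinearMap.intervalIntegral_comp_comm Complex.reCLM
            (hW1cont.intervalIntegrable _ _)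
      _ = (∑ ψ : DirichletCharacter ℂ q, ∑ m ∈ Icc 1 N, ∑ n ∈ Icc 1 N,
            (c ψ m * (starRingEnd ℂ) (c ψ n)) * G m n).re := by
          congr 1
          rw [intervalIntegral.integral_finset_sum (fun ψ _ =>
            ((continuous_finset_sum _ fun m _ => continuous_finset_sum _ fun n _ =>
              (continuous_const.fun_mul ((contE _).fun_mul continuous_const))).intervalIntegrable _ _))]
          refine Finset.sum_congr rfl fun ψ _ => ?_
          rw [intervalIntegral.integral_finset_sum (fun m _ =>
            ((continuous_finset_sum _ fun n _ =>
              (continuous_const.fun_mul ((contE _).fun_mul continuous_const))).intervalIntegrable _ _))]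
          refine Finset.sum_congr rfl fun m _ => ?_
          rw [intervalIntegral.integral_finset_sum (fun n _ =>
            ((continuous_const.fun_mul ((contE _).fun_mul continuous_const)).intervalIntegrable _ _))]
          refine Finset.sum_congr rfl fun n _ => ?_
          have hfe : (fun t : ℝ => (c ψ m * (starRingEnd ℂ) (c ψ n)) *
              (Complex.exp (Complex.I * (ξ m n) * t) * Eint (ξ m n) (-L) L))
              = fun t : ℝ => ((c ψ m * (starRingEnd ℂ) (c ψ n)) * Eint (ξ m n) (-L) L) *
                Complex.exp (Complex.I * (ξ m n) * t) := by
            funext t; ring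
          rw [hfe, intervalIntegral.integral_const_mul]
          have hE : (∫ t in (-δ)..δ, Complex.exp (Complex.I * (ξ m n) * t)) = Eint (ξ m n) (-δ) δ := rfl
          rw [hE, hGdef]
          ring
      _ = (∑ m ∈ Icc 1 N, ∑ n ∈ Icc 1 N,
          ((a m * (starRingEnd ℂ) (a n)) * (∑ ψ : DirichletCharacter ℂ q,
            ψ (m:ZMod q) * (starRingEnd ℂ) (ψ (n:ZMod q)))) * G m n).re := by
          congr 1
          rw [Finset.sum_comm]
          refine Finset.sum_congr rfl fun m _ => ?_
          rw [Finset.sum_comm]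
          refine Finset.sum_congr rfl fun n _ => ?_
          rw [← Finset.sum_mul]
          congr 1
          rw [Finset.mul_sum]
          refine Finset.sum_congr rfl fun ψ _ => ?_
          simp only [hcdef, map_mul]
          ring
  -- Step E : norm bounds
  have hxi_bound : ∀ m ∈ Icc 1 N, ∀ n ∈ Icc 1 N, n ≠ m →
      ‖G m n‖ ≤ 4*(N:ℝ)^2 * (1/(((m:ℝ)-(n:ℝ))^2)) := by
    intro m hm n hn hne
    obtain ⟨hm1, hmN⟩ := Finset.mem_Icc.mp hm
    obtain ⟨hn1, hnN⟩ := Finset.mem_Icc.mp hn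
    have hmn_ne : ((m:ℝ)-(n:ℝ)) ≠ 0 := by
      have : (n:ℝ) ≠ (m:ℝ) := by exact_mod_cast fun h => hne (by exact_mod_cast h)
      intro h; apply this; linarith
    have habs_pos : 0 < |(m:ℝ)-(n:ℝ)| := abs_pos.mpr hmn_ne
    have hN0' : (0:ℝ) < N := by linarith
    have hgap : |(m:ℝ)-(n:ℝ)|/N ≤ |ξ m n| := by
      rcases lt_or_gt_of_ne hne with h | h
      · -- n < m
        have hg := log_gap hn1 h hmN
        have hlt : (n:ℝ) < m := by exact_mod_cast h
        have habs1 : |(m:ℝ)-(n:ℝ)| = (m:ℝ)-(n:ℝ) := abs_of_pos (by linarith)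
        rw [habs1]
        exact le_trans hg (le_abs_self _)
      · -- m < n
        have hg := log_gap hm1 h hnN
        have hlt : (m:ℝ) < n := by exact_mod_cast h
        have habs1 : |(m:ℝ)-(n:ℝ)| = (n:ℝ)-(m:ℝ) := by
          rw [abs_of_neg (by linarith)]; ring
        rw [habs1]
        have : lam n - lam m = -(ξ m n) := by simp [hξdef]
        calc ((n:ℝ)-(m:ℝ))/N ≤ lam n - lam m := hg
          _ = -(ξ m n) := this
          _ ≤ |ξ m n| := neg_le_abs _
    have hξpos : 0 < |ξ m n| := lt_of_lt_of_le (by positivity) hgap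
    have hξne : ξ m n ≠ 0 := fun h => by rw [h] at hξpos; simp at hξpos
    have hnorm : ‖G m n‖ ≤ (2/|ξ m n|) * (2/|ξ m n|) := by
      rw [hGdef]
      calc ‖Eint (ξ m n) (-δ) δ * Eint (ξ m n) (-L) L‖
          = ‖Eint (ξ m n) (-δ) δ‖ * ‖Eint (ξ m n) (-L) L‖ := norm_mul _ _
        _ ≤ (2/|ξ m n|) * (2/|ξ m n|) :=
            mul_le_mul (norm_Eint_le' hξne _ _) (norm_Eint_le' hξne _ _)
              (norm_nonneg _) (by positivity)
    refine hnorm.trans ?_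
    have heq1 : (2/|ξ m n|) * (2/|ξ m n|) = 4/|ξ m n|^2 := by ring
    have heq2 : 4/((|(m:ℝ)-(n:ℝ)|/N)^2) = 4*(N:ℝ)^2 * (1/(((m:ℝ)-(n:ℝ))^2)) := by
      rw [div_pow, _root_.sq_abs]
      field_simp
    rw [heq1, ← heq2]
    apply div_le_div_of_nonneg_left (by norm_num) (by positivity)
    exact pow_le_pow_left₀ (by positivity) hgap 2
  have hdiag : ∀ m : ℕ, ‖G m m‖ ≤ (2*δ)*(2*L) := by
    intro m
    have h1 : ‖Eint (ξ m m) (-δ) δ‖ ≤ 2*δ := by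
      have := norm_Eint_le (ξ m m) (-δ) δ
      rwa [show δ - -δ = 2*δ by ring, abs_of_pos (by linarith)] at this
    have h2 : ‖Eint (ξ m m) (-L) L‖ ≤ 2*L := by
      have := norm_Eint_le (ξ m m) (-L) L
      rwa [show L - -L = 2*L by ring, abs_of_pos (by linarith)] at this
    rw [hGdef]
    calc ‖Eint (ξ m m) (-δ) δ * Eint (ξ m m) (-L) L‖
        = ‖Eint (ξ m m) (-δ) δ‖ * ‖Eint (ξ m m) (-L) L‖ := norm_mul _ _
      _ ≤ (2*δ)*(2*L) := mul_le_mul h1 h2 (norm_nonneg _) (by positivity)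
  have hK : ∀ m n : ℕ, ‖(∑ ψ : DirichletCharacter ℂ q,
      ψ (m:ZMod q) * (starRingEnd ℂ) (ψ (n:ZMod q)))‖
      ≤ (if (m:ZMod q) = (n:ZMod q) then (q:ℝ) else 0) := by
    intro m n
    rw [Kchar q (m:ZMod q) (n:ZMod q)]
    by_cases h : (n:ZMod q) = (m:ZMod q) ∧ IsUnit ((n:ZMod q))
    · rw [if_pos h, if_pos h.1.symm]
      rw [Complex.norm_natCast]
      exact_mod_cast Nat.totient_le q
    · rw [if_neg h, norm_zero]
      split
      · positivity
      · exact le_refl 0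
  have hE : (∑ m ∈ Icc 1 N, ∑ n ∈ Icc 1 N,
      ((a m * (starRingEnd ℂ) (a n)) * (∑ ψ : DirichletCharacter ℂ q,
        ψ (m:ZMod q) * (starRingEnd ℂ) (ψ (n:ZMod q)))) * G m n).re
      ≤ ∑ m ∈ Icc 1 N, ∑ n ∈ Icc 1 N,
        (if (m:ZMod q) = (n:ZMod q) then (q:ℝ) else 0) *
          (‖a m‖ * ‖a n‖) * ‖G m n‖ := by
    refine (Complex.re_le_norm _).trans ?_
    refine (norm_sum_le _ _).trans ?_
    refine Finset.sum_le_sum fun m _ => ?_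
    refine (norm_sum_le _ _).trans ?_
    refine Finset.sum_le_sum fun n _ => ?_
    rw [norm_mul, norm_mul, norm_mul]
    have hconjn : ‖(starRingEnd ℂ) (a n)‖ = ‖a n‖ := by
      rw [RCLike.norm_conj]
    have h1 : ‖a m‖ * ‖(starRingEnd ℂ) (a n)‖ = ‖a m‖ * ‖a n‖ := by
      rw [hconjn]
    rw [h1]
    have h2 := hK m n
    calc ‖a m‖ * ‖a n‖ *
          ‖∑ ψ : DirichletCharacter ℂ q, ψ (m:ZMod q) * (starRingEnd ℂ) (ψ (n:ZMod q))‖ * ‖G m n‖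
        ≤ ‖a m‖ * ‖a n‖ *
          (if (m:ZMod q) = (n:ZMod q) then (q:ℝ) else 0) * ‖G m n‖ := by
          gcongr
      _ = (if (m:ZMod q) = (n:ZMod q) then (q:ℝ) else 0) *
          (‖a m‖ * ‖a n‖) * ‖G m n‖ := by ring
  -- Step F : diagonal / off-diagonal split
  have hFsplit : ∀ m ∈ Icc 1 N,
      (∑ n ∈ Icc 1 N, (if (m:ZMod q) = (n:ZMod q) then (q:ℝ) else 0) *
        (‖a m‖ * ‖a n‖) * ‖G m n‖)
      ≤ (q:ℝ) * ‖a m‖ ^ 2 * ((2*δ)*(2*L))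
        + ∑ n ∈ Icc 1 N, (if ((m:ZMod q) = (n:ZMod q) ∧ n ≠ m) then
            2*(q:ℝ)*(N:ℝ)^2*(‖a m‖ ^ 2 + ‖a n‖ ^ 2) *
              (1/(((m:ℝ)-(n:ℝ))^2)) else 0) := by
    intro m hm
    have hpoint : ∀ n ∈ Icc 1 N,
        (if (m:ZMod q) = (n:ZMod q) then (q:ℝ) else 0) *
          (‖a m‖ * ‖a n‖) * ‖G m n‖
        ≤ (if n = m then (q:ℝ) * ‖a m‖ ^ 2 * ((2*δ)*(2*L)) else 0)
          + (if ((m:ZMod q) = (n:ZMod q) ∧ n ≠ m) then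
              2*(q:ℝ)*(N:ℝ)^2*(‖a m‖ ^ 2 + ‖a n‖ ^ 2) *
                (1/(((m:ℝ)-(n:ℝ))^2)) else 0) := by
      intro n hn
      by_cases hnm : n = m
      · subst hnm
        rw [if_pos rfl, if_pos rfl, if_neg (by simp), add_zero]
        calc (q:ℝ) * (‖a n‖ * ‖a n‖) * ‖G n n‖
            ≤ (q:ℝ) * (‖a n‖ * ‖a n‖) * ((2*δ)*(2*L)) := by
              gcongr
              exact hdiag n
          _ = (q:ℝ) * ‖a n‖ ^ 2 * ((2*δ)*(2*L)) := by ring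
      · rw [if_neg hnm, zero_add]
        by_cases hc : (m:ZMod q) = (n:ZMod q)
        · rw [if_pos hc, if_pos ⟨hc, hnm⟩]
          have hGb := hxi_bound m hm n hn hnm
          have ham : ‖a m‖ * ‖a n‖
              ≤ (‖a m‖ ^ 2 + ‖a n‖ ^ 2)/2 := by
            nlinarith [sq_nonneg (‖a m‖ - ‖a n‖)]
          have hmn_ne : ((m:ℝ)-(n:ℝ)) ≠ 0 := by
            have h1 : (1:ℕ) ≤ n := (Finset.mem_Icc.mp hn).1
            have : (n:ℝ) ≠ (m:ℝ) := by exact_mod_cast fun h => hnm (by exact_mod_cast h)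
            intro h; apply this; linarith
          calc (q:ℝ) * (‖a m‖ * ‖a n‖) * ‖G m n‖
              ≤ (q:ℝ) * ((‖a m‖ ^ 2 + ‖a n‖ ^ 2)/2) *
                  (4*(N:ℝ)^2 * (1/(((m:ℝ)-(n:ℝ))^2))) := by
                gcongr
              _ = 2*(q:ℝ)*(N:ℝ)^2*(‖a m‖ ^ 2 + ‖a n‖ ^ 2) *
                  (1/(((m:ℝ)-(n:ℝ))^2)) := by ring
        · rw [if_neg hc, if_neg (fun h => hc h.1)]
          simp
    calc (∑ n ∈ Icc 1 N, (if (m:ZMod q) = (n:ZMod q) then (q:ℝ) else 0) *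
          (‖a m‖ * ‖a n‖) * ‖G m n‖)
        ≤ ∑ n ∈ Icc 1 N, ((if n = m then (q:ℝ) * ‖a m‖ ^ 2 * ((2*δ)*(2*L)) else 0)
            + (if ((m:ZMod q) = (n:ZMod q) ∧ n ≠ m) then
                2*(q:ℝ)*(N:ℝ)^2*(‖a m‖ ^ 2 + ‖a n‖ ^ 2) *
                  (1/(((m:ℝ)-(n:ℝ))^2)) else 0)) := Finset.sum_le_sum hpoint
      _ = (∑ n ∈ Icc 1 N, (if n = m then (q:ℝ) * ‖a m‖ ^ 2 * ((2*δ)*(2*L)) else 0))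
            + ∑ n ∈ Icc 1 N, (if ((m:ZMod q) = (n:ZMod q) ∧ n ≠ m) then
                2*(q:ℝ)*(N:ℝ)^2*(‖a m‖ ^ 2 + ‖a n‖ ^ 2) *
                  (1/(((m:ℝ)-(n:ℝ))^2)) else 0) := Finset.sum_add_distrib
      _ = (q:ℝ) * ‖a m‖ ^ 2 * ((2*δ)*(2*L))
            + ∑ n ∈ Icc 1 N, (if ((m:ZMod q) = (n:ZMod q) ∧ n ≠ m) then
                2*(q:ℝ)*(N:ℝ)^2*(‖a m‖ ^ 2 + ‖a n‖ ^ 2) *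
                  (1/(((m:ℝ)-(n:ℝ))^2)) else 0) := by
          congr 1
          rw [Finset.sum_ite_eq' (Icc 1 N) m
            (fun _ => (q:ℝ) * ‖a m‖ ^ 2 * ((2*δ)*(2*L))), if_pos hm]
  -- inner counting bounds
  have hinnerA : ∀ m ∈ Icc 1 N,
      (∑ n ∈ Icc 1 N, (if ((m:ZMod q) = (n:ZMod q) ∧ n ≠ m) then
        (1:ℝ)/(((m:ℝ)-(n:ℝ))^2) else 0)) ≤ 4/(q:ℝ)^2 := by
    intro m hm
    have heq : (∑ n ∈ Icc 1 N, (if ((m:ZMod q) = (n:ZMod q) ∧ n ≠ m) then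
        (1:ℝ)/(((m:ℝ)-(n:ℝ))^2) else 0))
        = ∑ n ∈ (Icc 1 N).filter (fun n : ℕ => (n:ZMod q) = (m:ZMod q) ∧ n ≠ m),
          (1:ℝ)/(((m:ℝ)-(n:ℝ))^2) := by
      rw [Finset.sum_filter]
      refine Finset.sum_congr rfl fun n _ => ?_
      exact if_congr ⟨fun h => ⟨h.1.symm, h.2⟩, fun h => ⟨h.1.symm, h.2⟩⟩ rfl rfl
    rw [heq]
    exact count_lemma q N m hq (Finset.mem_Icc.mp hm).2
  have hinnerB : ∀ n ∈ Icc 1 N,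
      (∑ m ∈ Icc 1 N, (if ((m:ZMod q) = (n:ZMod q) ∧ n ≠ m) then
        (1:ℝ)/(((m:ℝ)-(n:ℝ))^2) else 0)) ≤ 4/(q:ℝ)^2 := by
    intro n hn
    have heq : (∑ m ∈ Icc 1 N, (if ((m:ZMod q) = (n:ZMod q) ∧ n ≠ m) then
        (1:ℝ)/(((m:ℝ)-(n:ℝ))^2) else 0))
        = ∑ m ∈ (Icc 1 N).filter (fun m : ℕ => (m:ZMod q) = (n:ZMod q) ∧ m ≠ n),
          (1:ℝ)/(((n:ℝ)-(m:ℝ))^2) := by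
      rw [Finset.sum_filter]
      refine Finset.sum_congr rfl fun m _ => ?_
      refine if_congr ⟨fun h => ⟨h.1, fun e => h.2 e.symm⟩, fun h => ⟨h.1, fun e => h.2 e.symm⟩⟩ ?_ rfl
      rw [show ((m:ℝ)-(n:ℝ))^2 = ((n:ℝ)-(m:ℝ))^2 by ring]
    rw [heq]
    exact count_lemma q N n hq (Finset.mem_Icc.mp hn).2
  -- off-diagonal total
  have hOff : (∑ m ∈ Icc 1 N, ∑ n ∈ Icc 1 N, (if ((m:ZMod q) = (n:ZMod q) ∧ n ≠ m) then
        2*(q:ℝ)*(N:ℝ)^2*(‖a m‖ ^ 2 + ‖a n‖ ^ 2) *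
          (1/(((m:ℝ)-(n:ℝ))^2)) else 0))
      ≤ 16*(N:ℝ)^2/(q:ℝ) * R := by
    have hsplit2 : ∀ m n : ℕ, (if ((m:ZMod q) = (n:ZMod q) ∧ n ≠ m) then
        2*(q:ℝ)*(N:ℝ)^2*(‖a m‖ ^ 2 + ‖a n‖ ^ 2) *
          (1/(((m:ℝ)-(n:ℝ))^2)) else 0)
        = (2*(q:ℝ)*(N:ℝ)^2*‖a m‖ ^ 2) * (if ((m:ZMod q) = (n:ZMod q) ∧ n ≠ m) then
            (1:ℝ)/(((m:ℝ)-(n:ℝ))^2) else 0)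
          + (2*(q:ℝ)*(N:ℝ)^2*‖a n‖ ^ 2) * (if ((m:ZMod q) = (n:ZMod q) ∧ n ≠ m) then
            (1:ℝ)/(((m:ℝ)-(n:ℝ))^2) else 0) := by
      intro m n
      by_cases h : ((m:ZMod q) = (n:ZMod q) ∧ n ≠ m)
      · rw [if_pos h, if_pos h]; ring
      · rw [if_neg h, if_neg h]; ring
    calc (∑ m ∈ Icc 1 N, ∑ n ∈ Icc 1 N, (if ((m:ZMod q) = (n:ZMod q) ∧ n ≠ m) then
          2*(q:ℝ)*(N:ℝ)^2*(‖a m‖ ^ 2 + ‖a n‖ ^ 2) *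
            (1/(((m:ℝ)-(n:ℝ))^2)) else 0))
        = (∑ m ∈ Icc 1 N, ∑ n ∈ Icc 1 N,
            (2*(q:ℝ)*(N:ℝ)^2*‖a m‖ ^ 2) * (if ((m:ZMod q) = (n:ZMod q) ∧ n ≠ m) then
              (1:ℝ)/(((m:ℝ)-(n:ℝ))^2) else 0))
          + (∑ m ∈ Icc 1 N, ∑ n ∈ Icc 1 N,
            (2*(q:ℝ)*(N:ℝ)^2*‖a n‖ ^ 2) * (if ((m:ZMod q) = (n:ZMod q) ∧ n ≠ m) then
              (1:ℝ)/(((m:ℝ)-(n:ℝ))^2) else 0)) := by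
          rw [← Finset.sum_add_distrib]
          refine Finset.sum_congr rfl fun m _ => ?_
          rw [← Finset.sum_add_distrib]
          exact Finset.sum_congr rfl fun n _ => hsplit2 m n
      _ ≤ (8*(N:ℝ)^2/(q:ℝ)) * R + (8*(N:ℝ)^2/(q:ℝ)) * R := by
          have hA' : (∑ m ∈ Icc 1 N, ∑ n ∈ Icc 1 N,
              (2*(q:ℝ)*(N:ℝ)^2*‖a m‖ ^ 2) * (if ((m:ZMod q) = (n:ZMod q) ∧ n ≠ m) then
                (1:ℝ)/(((m:ℝ)-(n:ℝ))^2) else 0)) ≤ (8*(N:ℝ)^2/(q:ℝ)) * R := by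
            calc (∑ m ∈ Icc 1 N, ∑ n ∈ Icc 1 N,
                (2*(q:ℝ)*(N:ℝ)^2*‖a m‖ ^ 2) * (if ((m:ZMod q) = (n:ZMod q) ∧ n ≠ m) then
                  (1:ℝ)/(((m:ℝ)-(n:ℝ))^2) else 0))
                ≤ ∑ m ∈ Icc 1 N, (2*(q:ℝ)*(N:ℝ)^2*‖a m‖ ^ 2) * (4/(q:ℝ)^2) := by
                  refine Finset.sum_le_sum fun m hm => ?_
                  rw [← Finset.mul_sum]
                  exact mul_le_mul_of_nonneg_left (hinnerA m hm) (by positivity)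
              _ = (8*(N:ℝ)^2/(q:ℝ)) * R := by
                  rw [hRdef, Finset.mul_sum]
                  refine Finset.sum_congr rfl fun m _ => ?_
                  field_simp
                  ring
          have hB' : (∑ m ∈ Icc 1 N, ∑ n ∈ Icc 1 N,
              (2*(q:ℝ)*(N:ℝ)^2*‖a n‖ ^ 2) * (if ((m:ZMod q) = (n:ZMod q) ∧ n ≠ m) then
                (1:ℝ)/(((m:ℝ)-(n:ℝ))^2) else 0)) ≤ (8*(N:ℝ)^2/(q:ℝ)) * R := by
            rw [Finset.sum_comm]
            calc (∑ n ∈ Icc 1 N, ∑ m ∈ Icc 1 N,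
                (2*(q:ℝ)*(N:ℝ)^2*‖a n‖ ^ 2) * (if ((m:ZMod q) = (n:ZMod q) ∧ n ≠ m) then
                  (1:ℝ)/(((m:ℝ)-(n:ℝ))^2) else 0))
                ≤ ∑ n ∈ Icc 1 N, (2*(q:ℝ)*(N:ℝ)^2*‖a n‖ ^ 2) * (4/(q:ℝ)^2) := by
                  refine Finset.sum_le_sum fun n hn => ?_
                  rw [← Finset.mul_sum]
                  exact mul_le_mul_of_nonneg_left (hinnerB n hn) (by positivity)
              _ = (8*(N:ℝ)^2/(q:ℝ)) * R := by
                  rw [hRdef, Finset.mul_sum]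
                  refine Finset.sum_congr rfl fun n _ => ?_
                  field_simp
                  ring
          exact add_le_add hA' hB'
      _ = 16*(N:ℝ)^2/(q:ℝ) * R := by ring
  -- final assembly
  have hqδ : (q:ℝ)*δ = (N:ℝ)+1 := by
    rw [hδdef]
    field_simp
  have hEtot : (∑ m ∈ Icc 1 N, ∑ n ∈ Icc 1 N,
      (if (m:ZMod q) = (n:ZMod q) then (q:ℝ) else 0) *
        (‖a m‖ * ‖a n‖) * ‖G m n‖)
      ≤ ((q:ℝ) * ((2*δ)*(2*L))) * R + 16*(N:ℝ)^2/(q:ℝ) * R := by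
    calc (∑ m ∈ Icc 1 N, ∑ n ∈ Icc 1 N,
        (if (m:ZMod q) = (n:ZMod q) then (q:ℝ) else 0) *
          (‖a m‖ * ‖a n‖) * ‖G m n‖)
        ≤ ∑ m ∈ Icc 1 N, ((q:ℝ) * ‖a m‖ ^ 2 * ((2*δ)*(2*L))
            + ∑ n ∈ Icc 1 N, (if ((m:ZMod q) = (n:ZMod q) ∧ n ≠ m) then
                2*(q:ℝ)*(N:ℝ)^2*(‖a m‖ ^ 2 + ‖a n‖ ^ 2) *
                  (1/(((m:ℝ)-(n:ℝ))^2)) else 0)) := Finset.sum_le_sum hFsplit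
      _ = (∑ m ∈ Icc 1 N, (q:ℝ) * ‖a m‖ ^ 2 * ((2*δ)*(2*L)))
            + (∑ m ∈ Icc 1 N, ∑ n ∈ Icc 1 N, (if ((m:ZMod q) = (n:ZMod q) ∧ n ≠ m) then
                2*(q:ℝ)*(N:ℝ)^2*(‖a m‖ ^ 2 + ‖a n‖ ^ 2) *
                  (1/(((m:ℝ)-(n:ℝ))^2)) else 0)) := Finset.sum_add_distrib
      _ ≤ ((q:ℝ) * ((2*δ)*(2*L))) * R + 16*(N:ℝ)^2/(q:ℝ) * R := by
          refine add_le_add (le_of_eq ?_) hOff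
          rw [hRdef, Finset.mul_sum]
          refine Finset.sum_congr rfl fun m _ => ?_
          ring
  have hscal : ((q:ℝ) * ((2*δ)*(2*L))) + 16*(N:ℝ)^2/(q:ℝ) ≤ 2*δ*(100*((q:ℝ)*U+(N:ℝ))) := by
    have e1 : ((q:ℝ) * ((2*δ)*(2*L))) = 4*(((N:ℝ)+1)*U) + 4*(((N:ℝ)+1)*δ) := by
      rw [hLdef, ← hqδ]; ring
    have hqv : (q:ℝ) = ((N:ℝ)+1)/δ := by
      rw [eq_div_iff (ne_of_gt hδ)]
      linarith [hqδ]
    have e2 : 16*(N:ℝ)^2/(q:ℝ) = 16*(N:ℝ)^2*δ/((N:ℝ)+1) := by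
      rw [hqv, div_div_eq_mul_div]
    have e3 : 16*(N:ℝ)^2*δ/((N:ℝ)+1) ≤ 16*((N:ℝ)*δ) := by
      rw [div_le_iff₀ (by positivity)]
      nlinarith [hδ.le, hNr]
    have e4 : 2*δ*(100*((q:ℝ)*U+(N:ℝ))) = 200*(((N:ℝ)+1)*U) + 200*((N:ℝ)*δ) := by
      have : 2*δ*(100*((q:ℝ)*U+(N:ℝ))) = 200*(((q:ℝ)*δ)*U) + 200*((N:ℝ)*δ) := by ring
      rw [this, hqδ]
    have h5 : (0:ℝ) ≤ ((N:ℝ)+1)*U := by positivity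
    have h6 : δ ≤ (N:ℝ)*δ := by nlinarith [hδ.le, hNr]
    have h7 : 4*(((N:ℝ)+1)*δ) = 4*((N:ℝ)*δ) + 4*δ := by ring
    rw [e1, e2, e4]
    linarith [e3, hδ.le]
  have hIneq : (∫ u in (-U)..U, S u) ≤ 100*((q:ℝ)*U+(N:ℝ))*R := by
    have h2δ : (0:ℝ) < 2*δ := by linarith
    refine (mul_le_mul_iff_right₀ h2δ).mp ?_
    calc 2*δ*(∫ u in (-U)..U, S u)
        ≤ ∫ t in (-δ)..δ, (∫ u in (t-L)..(t+L), S u) := hkey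
      _ = (∑ m ∈ Icc 1 N, ∑ n ∈ Icc 1 N,
          ((a m * (starRingEnd ℂ) (a n)) * (∑ ψ : DirichletCharacter ℂ q,
            ψ (m:ZMod q) * (starRingEnd ℂ) (ψ (n:ZMod q)))) * G m n).re := hD2
      _ ≤ ∑ m ∈ Icc 1 N, ∑ n ∈ Icc 1 N,
          (if (m:ZMod q) = (n:ZMod q) then (q:ℝ) else 0) *
            (‖a m‖ * ‖a n‖) * ‖G m n‖ := hE
      _ ≤ ((q:ℝ) * ((2*δ)*(2*L))) * R + 16*(N:ℝ)^2/(q:ℝ) * R := hEtot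
      _ = (((q:ℝ) * ((2*δ)*(2*L))) + 16*(N:ℝ)^2/(q:ℝ)) * R := by ring
      _ ≤ (2*δ*(100*((q:ℝ)*U+(N:ℝ)))) * R := mul_le_mul_of_nonneg_right hscal hR0
      _ = 2*δ*(100*((q:ℝ)*U+(N:ℝ))*R) := by ring
  calc (∫ u in (-U)..U, ∑ ψ : DirichletCharacter ℂ q,
        ‖∑ n ∈ Finset.Icc 1 N, a n * ψ (n : ZMod q) *
          (n : ℂ) ^ (Complex.I * (u:ℂ))‖ ^ 2)
      = ∫ u in (-U)..U, S u := intervalIntegral.integral_congr (fun u _ => hA u)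
    _ ≤ 100*((q:ℝ)*U+(N:ℝ))*R := hIneq
    _ = 100 * ((q:ℝ)*U+(N:ℝ)) * ∑ n ∈ Finset.Icc 1 N, ‖a n‖ ^ 2 := by rw [hRdef]
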